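/- Let x ∈ Ω̄ and let γ be an admissible curve for x whose cost equals v(x) and which has constant speed: |γ′(s)| = ℓ_γ > 0 for almost every s ∈ (0,1). Let φ : ℝⁿ → ℝ be continuously differentiable, and suppose there exist λ ∈ (0,1) and t ∈ (0,1) such that γ′(s) · ∇φ(γ(s)) ≤ λ σ(γ(s), γ′(s)) for almost every s ∈ (t,1). Then φ(x) − φ(γ(t)) ≤ v(x) − v(γ(t)) + (λ − 1)(1 − t) ℓ_γ σ_*; in particular φ(x) − φ(γ(t)) < v(x) − v(γ(t)). -/

import Mathlib

open Set Metric MeasureTheory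

noncomputable section

abbrev Euc (n : ℕ) := EuclideanSpace ℝ (Fin n)

/-- An admissible curve for the point `x`: a Lipschitz curve `γ : [0,1] → ℝⁿ` with values
in `Ω̄`, starting in `V̄₀` and ending at `x`. -/
def IsAdmissible {n : ℕ} (Ω V₀ : Set (Euc n)) (x : Euc n) (γ : ℝ → Euc n) : Prop :=
  (∃ K : NNReal, LipschitzWith K γ) ∧ (∀ s ∈ Icc (0:ℝ) 1, γ s ∈ Ω) ∧ γ 0 ∈ V₀ ∧ γ 1 = x

/-- The cost of a curve: `∫₀¹ σ(γ(s), γ′(s)) ds`. -/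
def curveCost {n : ℕ} (σ : Euc n → Euc n → ℝ) (γ : ℝ → Euc n) : ℝ :=
  ∫ s in (0:ℝ)..1, σ (γ s) (deriv γ s)

/-- The time-of-attachment function: infimum of costs over admissible curves. -/
def timeOfAttachment {n : ℕ} (Ω V₀ : Set (Euc n)) (σ : Euc n → Euc n → ℝ) (x : Euc n) : ℝ :=
  sInf (curveCost σ '' {γ : ℝ → Euc n | IsAdmissible Ω V₀ x γ})

/-- The geodesic distance on `Ω̄`. -/
def geodDist {n : ℕ} (Ω : Set (Euc n)) (x y : Euc n) : ℝ :=
  sInf {L : ℝ | ∃ γ : ℝ → Euc n, (∃ K : NNReal, LipschitzWith K γ) ∧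
    (∀ s ∈ Icc (0:ℝ) 1, γ s ∈ Ω) ∧ γ 0 = y ∧ γ 1 = x ∧
    L = ∫ s in (0:ℝ)..1, ‖deriv γ s‖}

open Filter


/-- slope limit along a sequence from the right -/
lemma slope_seq_tendsto {f : ℝ → ℝ} {f' c : ℝ} (hf : HasDerivAt f f' c)
    (u : ℕ → ℝ) (hu0 : ∀ n, 0 < u n) (hu : Tendsto u atTop (nhds 0)) :
    Tendsto (fun n => (f (c + u n) - f c) / u n) atTop (nhds f') := by
  have hslope := hasDerivAt_iff_tendsto_slope.1 hf
  have hseq : Tendsto (fun n => c + u n) atTop (nhdsWithin c {c}ᶜ) := by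
    apply tendsto_nhdsWithin_of_tendsto_nhds_of_eventually_within
    · simpa using tendsto_const_nhds.add hu
    · filter_upwards with n
      simp only [mem_compl_iff, mem_singleton_iff]
      intro h
      nlinarith [hu0 n, h]
  refine (hslope.comp hseq).congr fun n => ?_
  rw [Function.comp_apply, slope_def_field, add_sub_cancel_left]

lemma lipschitz_norm_deriv_le {E : Type*} [NormedAddCommGroup E] [NormedSpace ℝ E]
    {f : ℝ → E} {M : NNReal} (hf : LipschitzWith M f) (s : ℝ) : ‖deriv f s‖ ≤ M := by
  rw [← fderiv_apply_one_eq_deriv]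
  calc ‖fderiv ℝ f s 1‖ ≤ ‖fderiv ℝ f s‖ * ‖(1:ℝ)‖ := (fderiv ℝ f s).le_opNorm 1
    _ ≤ M := by
      rw [norm_one, mul_one]
      exact norm_fderiv_le_of_lipschitz ℝ hf

lemma lipschitz_ftc {g : ℝ → ℝ} {M : NNReal} (hg : LipschitzWith M g)
    {a b : ℝ} (hab : a ≤ b) : ∫ s in a..b, deriv g s = g b - g a := by
  have hc : Continuous g := hg.continuous
  set u : ℕ → ℝ := fun n => 1 / (n + 1 : ℝ) with hu_def
  have hu0 : ∀ n, 0 < u n := fun n => by positivity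
  have hu : Tendsto u atTop (nhds 0) := tendsto_one_div_add_atTop_nhds_zero_nat
  set F : ℕ → ℝ := fun n => ∫ s in a..b, (g (s + u n) - g s) / u n with hF_def
  -- limit 1 : F n → g b - g a
  have endpoint : ∀ c : ℝ, Tendsto (fun n => (∫ s in c..(c + u n), g s) / u n)
      atTop (nhds (g c)) := by
    intro c
    have hprim : HasDerivAt (fun y => ∫ s in a..y, g s) (g c) c :=
      intervalIntegral.integral_hasDerivAt_right (hc.intervalIntegrable a c)
        (hc.stronglyMeasurable.stronglyMeasurableAtFilter) hc.continuousAt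
    have := slope_seq_tendsto hprim u hu0 hu
    refine this.congr fun n => ?_
    congr 1
    rw [eq_comm, intervalIntegral.integral_interval_sub_left (hc.intervalIntegrable _ _)
      (hc.intervalIntegrable _ _)]
  have claim1 : ∀ n, F n = (∫ s in b..(b + u n), g s) / u n
      - (∫ s in a..(a + u n), g s) / u n := by
    intro n
    have h1 : ∫ s in a..b, g (s + u n) = ∫ s in (a + u n)..(b + u n), g s :=
      intervalIntegral.integral_comp_add_right g (u n)
    have h2 : (∫ s in a..(a + u n), g s) + ∫ s in (a + u n)..(b + u n), g s
        = ∫ s in a..(b + u n), g s :=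
      intervalIntegral.integral_add_adjacent_intervals (hc.intervalIntegrable _ _)
        (hc.intervalIntegrable _ _)
    have h3 : (∫ s in a..b, g s) + ∫ s in b..(b + u n), g s = ∫ s in a..(b + u n), g s :=
      intervalIntegral.integral_add_adjacent_intervals (hc.intervalIntegrable _ _)
        (hc.intervalIntegrable _ _)
    have h4 : F n = ((∫ s in a..b, g (s + u n)) - ∫ s in a..b, g s) / u n := by
      rw [hF_def]
      simp only [div_eq_mul_inv, sub_mul]
      rw [intervalIntegral.integral_sub]
      · rw [intervalIntegral.integral_mul_const, intervalIntegral.integral_mul_const]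
      · exact ((hc.comp (continuous_id.add continuous_const)).mul continuous_const).intervalIntegrable _ _
      · exact (hc.mul continuous_const).intervalIntegrable _ _
    rw [h4, h1, div_sub_div_same]
    congr 1
    linarith
  have lim1 : Tendsto F atTop (nhds (g b - g a)) := by
    have := (endpoint b).sub (endpoint a)
    refine Tendsto.congr (fun n => (claim1 n).symm) this
  -- limit 2 : F n → ∫ deriv g, by dominated convergence
  have lim2 : Tendsto F atTop (nhds (∫ s in a..b, deriv g s)) := by
    have hae : ∀ᵐ s ∂(volume.restrict (Ioc a b)), DifferentiableAt ℝ g s :=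
      ae_restrict_of_ae hg.ae_differentiableAt
    have key : Tendsto (fun n => ∫ s in Ioc a b, (g (s + u n) - g s) / u n)
        atTop (nhds (∫ s in Ioc a b, deriv g s)) := by
      apply tendsto_integral_of_dominated_convergence (fun _ => (M : ℝ))
      · intro n
        exact (((hc.comp (continuous_id.add continuous_const)).sub hc).div_const _).aestronglyMeasurable
      · exact integrable_const _
      · intro n
        filter_upwards with s
        rw [Real.norm_eq_abs, abs_div, abs_of_pos (hu0 n)]
        rw [div_le_iff₀ (hu0 n)]
        calc |g (s + u n) - g s| = dist (g (s + u n)) (g s) := by rw [Real.dist_eq]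
          _ ≤ M * dist (s + u n) s := hg.dist_le_mul _ _
          _ = M * u n := by
              rw [Real.dist_eq, add_sub_cancel_left, abs_of_pos (hu0 n)]
      · filter_upwards [hae] with s hs
        exact slope_seq_tendsto hs.hasDerivAt u hu0 hu
    rw [hF_def]
    simp only [intervalIntegral.integral_of_le hab]
    exact key
  have := tendsto_nhds_unique lim2 lim1
  rw [intervalIntegral.integral_of_le hab]
  rw [intervalIntegral.integral_of_le hab] at this
  exact this




lemma curve_integrand_measurable {n : ℕ} {Ω : Set (Euc n)}
    {σ : Euc n → Euc n → ℝ}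
    (hσcont : ContinuousOn (fun p : Euc n × Euc n => σ p.1 p.2) (Ω ×ˢ (univ : Set (Euc n))))
    {β : ℝ → Euc n} {K : NNReal} (hβ : LipschitzWith K β)
    (hβΩ : ∀ s ∈ Icc (0:ℝ) 1, β s ∈ Ω) :
    Measurable (fun s => σ (β (max 0 (min s 1))) (deriv β s)) := by
  have hclmem : ∀ s : ℝ, max 0 (min s 1) ∈ Icc (0:ℝ) 1 :=
    fun s => ⟨le_max_left _ _, max_le (by norm_num) (min_le_right _ _)⟩
  have hmem : ∀ s : ℝ, ((β (max 0 (min s 1)), deriv β s) : Euc n × Euc n)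
      ∈ Ω ×ˢ (univ : Set (Euc n)) := fun s => ⟨hβΩ _ (hclmem s), trivial⟩
  have hclc : Continuous (fun s : ℝ => max 0 (min s 1)) :=
    continuous_const.max ((continuous_id.min continuous_const))
  have hpair : Measurable (fun s : ℝ => ((β (max 0 (min s 1)), deriv β s) : Euc n × Euc n)) :=
    ((hβ.continuous.comp hclc).measurable).prodMk (measurable_deriv β)
  have h1 : Measurable (fun s : ℝ =>
      (⟨(β (max 0 (min s 1)), deriv β s), hmem s⟩ : (Ω ×ˢ (univ : Set (Euc n))))) :=
    hpair.subtype_mk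
  exact (hσcont.restrict.measurable).comp h1

lemma curve_integrand_integrable {n : ℕ} {Ω : Set (Euc n)}
    {σ : Euc n → Euc n → ℝ}
    (hσcont : ContinuousOn (fun p : Euc n × Euc n => σ p.1 p.2) (Ω ×ˢ (univ : Set (Euc n))))
    {σu : ℝ} (hσu0 : 0 ≤ σu) (hσub : ∀ x ∈ Ω, ∀ q : Euc n, |σ x q| ≤ σu * ‖q‖)
    {β : ℝ → Euc n} {K : NNReal} (hβ : LipschitzWith K β)
    (hβΩ : ∀ s ∈ Icc (0:ℝ) 1, β s ∈ Ω) (a b : ℝ) :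
    IntervalIntegrable (fun s => σ (β (max 0 (min s 1))) (deriv β s)) volume a b := by
  have hclmem : ∀ s : ℝ, max 0 (min s 1) ∈ Icc (0:ℝ) 1 :=
    fun s => ⟨le_max_left _ _, max_le (by norm_num) (min_le_right _ _)⟩
  rw [intervalIntegrable_iff]
  have hfin : volume (uIoc a b) < ⊤ := by rw [uIoc]; exact measure_Ioc_lt_top
  haveI : IsFiniteMeasure (volume.restrict (uIoc a b)) := ⟨by rwa [Measure.restrict_apply_univ]⟩
  refine ⟨((curve_integrand_measurable hσcont hβ hβΩ).aestronglyMeasurable).restrict, ?_⟩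
  apply MeasureTheory.HasFiniteIntegral.of_bounded (C := σu * K)
  filter_upwards with s
  rw [Real.norm_eq_abs]
  calc |σ (β (max 0 (min s 1))) (deriv β s)| ≤ σu * ‖deriv β s‖ :=
        hσub _ (hβΩ _ (hclmem s)) _
    _ ≤ σu * K := by
      have h1 : ‖deriv β s‖ ≤ (K:ℝ) := lipschitz_norm_deriv_le hβ s
      nlinarith [hσu0]
theorem test_function_strict_decrease
    {n : ℕ} (hn : 1 ≤ n)
    (Ω V₀ : Set (Euc n)) (hΩne : Ω.Nonempty) (hΩcl : IsClosed Ω)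
    (hV₀ne : V₀.Nonempty) (hV₀cl : IsClosed V₀) (hV₀sub : V₀ ⊆ Ω)
    (σl σu : ℝ) (hσl : 0 < σl) (hσlu : σl ≤ σu)
    (σ : Euc n → Euc n → ℝ)
    (hσcont : ContinuousOn (fun p : Euc n × Euc n => σ p.1 p.2) (Ω ×ˢ (univ : Set (Euc n))))
    (hσbound : ∀ x ∈ Ω, ∀ q : Euc n, σl * ‖q‖ ≤ σ x q ∧ σ x q ≤ σu * ‖q‖)
    (hadm : ∀ x ∈ Ω, ∃ γ : ℝ → Euc n, IsAdmissible Ω V₀ x γ)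
    (v : Euc n → ℝ) (hvnonneg : ∀ x ∈ Ω, 0 ≤ v x)
    (hv : ∀ x ∈ Ω, v x = timeOfAttachment Ω V₀ σ x)
    (x : Euc n) (hx : x ∈ Ω)
    (γ : ℝ → Euc n) (hγ : IsAdmissible Ω V₀ x γ) (hopt : curveCost σ γ = v x)
    (ℓγ : ℝ) (hℓγ : 0 < ℓγ)
    (hspeed : ∀ᵐ s ∂(volume.restrict (Ioo (0:ℝ) 1)), ‖deriv γ s‖ = ℓγ)
    (φ : Euc n → ℝ) (hφ : ContDiff ℝ 1 φ)
    (lam t : ℝ) (hlam : lam ∈ Ioo (0:ℝ) 1) (ht : t ∈ Ioo (0:ℝ) 1)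
    (hineq : ∀ᵐ s ∂(volume.restrict (Ioo t 1)),
      fderiv ℝ φ (γ s) (deriv γ s) ≤ lam * σ (γ s) (deriv γ s)) :
    φ x - φ (γ t) ≤ v x - v (γ t) + (lam - 1) * (1 - t) * ℓγ * σl ∧
    φ x - φ (γ t) < v x - v (γ t) := by
  obtain ⟨⟨K, hK⟩, hγΩ, hγ0, hγ1⟩ := hγ
  obtain ⟨ht0, ht1⟩ := ht
  obtain ⟨hlam0, hlam1⟩ := hlam
  have hφdiff : Differentiable ℝ φ := hφ.differentiable one_ne_zero
  have hσu0 : (0:ℝ) ≤ σu := le_trans hσl.le hσlu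
  have habs : ∀ y ∈ Ω, ∀ q : Euc n, |σ y q| ≤ σu * ‖q‖ := by
    intro y hy q
    obtain ⟨h1, h2⟩ := hσbound y hy q
    rw [abs_le]
    constructor
    · nlinarith [mul_nonneg hσl.le (norm_nonneg q), mul_nonneg hσu0 (norm_nonneg q)]
    · exact h2
  have hγtΩ : γ t ∈ Ω := hγΩ t ⟨ht0.le, ht1.le⟩
  set cl : ℝ → ℝ := fun s => max 0 (min s 1) with hcl_def
  have hcl_eq : ∀ s ∈ Icc (0:ℝ) 1, cl s = s := fun s hs => by
    rw [hcl_def]; dsimp only; rw [min_eq_left hs.2, max_eq_right hs.1]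
  set g : ℝ → ℝ := fun s => σ (γ (cl s)) (deriv γ s) with hg_def
  have hg_int : ∀ a b : ℝ, IntervalIntegrable g volume a b :=
    curve_integrand_integrable hσcont hσu0 habs hK hγΩ
  have hgicc : ∀ s ∈ Icc (0:ℝ) 1, g s = σ (γ s) (deriv γ s) := fun s hs => by
    rw [hg_def]; dsimp only; rw [hcl_eq s hs]
  have hvx : v x = ∫ s in (0:ℝ)..1, g s := by
    rw [← hopt, curveCost]
    apply intervalIntegral.integral_congr
    intro s hs
    rw [uIcc_of_le (by norm_num : (0:ℝ) ≤ 1)] at hs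
    exact (hgicc s hs).symm
  have hbdd : BddBelow (curveCost σ '' {β : ℝ → Euc n | IsAdmissible Ω V₀ (γ t) β}) := by
    refine ⟨0, ?_⟩
    rintro r ⟨β, hβ, rfl⟩
    exact intervalIntegral.integral_nonneg (by norm_num)
      (fun u hu => le_trans (mul_nonneg hσl.le (norm_nonneg _)) (hσbound _ (hβ.2.1 u hu) _).1)
  -- the stopped curve
  set δ : ℝ → Euc n := fun s => γ (min s t) with hδ_def
  have hδK : LipschitzWith (K * max 1 0) δ :=
    hK.comp (LipschitzWith.id.min (LipschitzWith.const t))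
  have hδΩ : ∀ s ∈ Icc (0:ℝ) 1, δ s ∈ Ω := fun s hs =>
    hγΩ _ ⟨le_min hs.1 ht0.le, le_trans (min_le_left _ _) hs.2⟩
  have hδadm : IsAdmissible Ω V₀ (γ t) δ := by
    refine ⟨⟨K * max 1 0, hδK⟩, hδΩ, ?_, ?_⟩
    · rw [hδ_def]; dsimp only; rw [min_eq_left ht0.le]; exact hγ0
    · rw [hδ_def]; dsimp only; rw [min_eq_right ht1.le]
  set fδ : ℝ → ℝ := fun s => σ (δ s) (deriv δ s) with hfδ_def
  set gδ : ℝ → ℝ := fun s => σ (δ (cl s)) (deriv δ s) with hgδ_def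
  have hgδ_int : ∀ a b : ℝ, IntervalIntegrable gδ volume a b :=
    curve_integrand_integrable hσcont hσu0 habs hδK hδΩ
  have hfδgδ : ∀ s ∈ Icc (0:ℝ) 1, fδ s = gδ s := fun s hs => by
    rw [hfδ_def, hgδ_def]; dsimp only; rw [hcl_eq s hs]
  have hfδ0 : ∀ s ∈ Ioc t (1:ℝ), fδ s = 0 := by
    intro s hs
    have hloc : δ =ᶠ[nhds s] (fun _ => γ t) :=
      eventually_of_mem (Ioi_mem_nhds hs.1)
        (fun y hy => by rw [hδ_def]; dsimp only; rw [min_eq_right (le_of_lt hy)])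
    have hδs : δ s = γ t := by rw [hδ_def]; dsimp only; rw [min_eq_right hs.1.le]
    rw [hfδ_def]; dsimp only
    rw [hloc.deriv_eq, deriv_const, hδs]
    have hb := hσbound (γ t) hγtΩ 0
    rw [norm_zero, mul_zero, mul_zero] at hb
    exact le_antisymm hb.2 hb.1
  have hint_fδ_t1 : IntervalIntegrable fδ volume t 1 := by
    rw [intervalIntegrable_iff, uIoc_of_le ht1.le]
    apply (integrable_zero _ _ _).congr
    exact (ae_restrict_mem measurableSet_Ioc).mono fun s hs => (hfδ0 s hs).symm
  have hint_fδ_0t : IntervalIntegrable fδ volume 0 t := by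
    have h1 := hgδ_int 0 t
    rw [intervalIntegrable_iff, uIoc_of_le ht0.le] at h1 ⊢
    exact h1.congr ((ae_restrict_mem measurableSet_Ioc).mono
      fun s hs => (hfδgδ s ⟨hs.1.le, hs.2.trans ht1.le⟩).symm)
  have hcost0 : ∫ s in t..(1:ℝ), fδ s = 0 := by
    rw [intervalIntegral.integral_congr_ae (g := fun _ => (0:ℝ)) ?_]
    · simp
    · filter_upwards with s hs
      rw [uIoc_of_le ht1.le] at hs
      exact hfδ0 s hs
  have hne_t : ∀ᵐ s : ℝ ∂(volume : Measure ℝ), s ≠ t := by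
    rw [ae_iff]
    have : {s : ℝ | ¬ s ≠ t} = {t} := by ext y; simp
    rw [this]
    exact Real.volume_singleton
  have h0t : ∫ s in (0:ℝ)..t, fδ s = ∫ s in (0:ℝ)..t, g s := by
    apply intervalIntegral.integral_congr_ae
    filter_upwards [hne_t] with s hsne hs
    rw [uIoc_of_le ht0.le] at hs
    have hst : s < t := lt_of_le_of_ne hs.2 hsne
    have hloc : δ =ᶠ[nhds s] γ :=
      eventually_of_mem (Iio_mem_nhds hst)
        (fun y hy => by rw [hδ_def]; dsimp only; rw [min_eq_left (le_of_lt hy)])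
    have hδs : δ s = γ s := by rw [hδ_def]; dsimp only; rw [min_eq_left hst.le]
    rw [hfδ_def, hg_def]; dsimp only
    rw [hloc.deriv_eq, hδs, hcl_eq s ⟨hs.1.le, le_trans hs.2 ht1.le⟩]
  have hcurveδ : curveCost σ δ = ∫ s in (0:ℝ)..t, g s := by
    have : curveCost σ δ = (∫ s in (0:ℝ)..t, fδ s) + ∫ s in t..(1:ℝ), fδ s := by
      rw [curveCost]
      exact (intervalIntegral.integral_add_adjacent_intervals hint_fδ_0t hint_fδ_t1).symm
    rw [this, hcost0, add_zero, h0t]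
  have hvγt : v (γ t) ≤ ∫ s in (0:ℝ)..t, g s := by
    rw [hv (γ t) hγtΩ, timeOfAttachment, ← hcurveδ]
    exact csInf_le hbdd ⟨δ, hδadm, rfl⟩
  have hsplitγ : v x = (∫ s in (0:ℝ)..t, g s) + ∫ s in t..(1:ℝ), g s := by
    rw [hvx]
    exact (intervalIntegral.integral_add_adjacent_intervals (hg_int 0 t) (hg_int t 1)).symm
  have key1 : ∫ s in t..(1:ℝ), g s ≤ v x - v (γ t) := by linarith
  -- the test function along the curve
  have hKc : IsCompact (γ '' Icc (t-1) 2) := isCompact_Icc.image hK.continuous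
  obtain ⟨R, hR⟩ := hKc.isBounded.subset_closedBall 0
  obtain ⟨M0, hM0⟩ := (isCompact_closedBall (0:Euc n) R).exists_bound_of_continuousOn
    ((hφ.continuous_fderiv one_ne_zero).continuousOn)
  have hφlip : LipschitzOnWith M0.toNNReal φ (closedBall 0 R) := by
    apply Convex.lipschitzOnWith_of_nnnorm_fderiv_le (fun y _ => hφdiff y) ?_ (convex_closedBall 0 R)
    intro y hy
    rw [← NNReal.coe_le_coe, coe_nnnorm, Real.coe_toNNReal']
    exact le_max_of_le_left (hM0 y hy)
  have hmap : MapsTo γ (Icc (t-1) 2) (closedBall 0 R) := fun s hs => hR (mem_image_of_mem γ hs)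
  have hcomp : LipschitzOnWith (M0.toNNReal * K) (φ ∘ γ) (Icc (t-1) 2) :=
    hφlip.comp hK.lipschitzOnWith hmap
  obtain ⟨ψ, hψlip, hψeq⟩ := hcomp.extend_real
  have ht_mem : t ∈ Icc (t-1) (2:ℝ) := ⟨by linarith, by linarith⟩
  have h1_mem : (1:ℝ) ∈ Icc (t-1) (2:ℝ) := ⟨by linarith, by norm_num⟩
  have hψ1 : ψ 1 = φ x := by rw [← hψeq h1_mem, Function.comp_apply, hγ1]
  have hψt : ψ t = φ (γ t) := (hψeq ht_mem).symm
  have hftc : φ x - φ (γ t) = ∫ s in t..(1:ℝ), deriv ψ s := by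
    rw [lipschitz_ftc hψlip ht1.le, hψ1, hψt]
  have hderiv_eq : ∀ s ∈ Ioc t (1:ℝ), deriv ψ s = deriv (φ ∘ γ) s := by
    intro s hs
    have hsIoo : s ∈ Ioo (t-1) (2:ℝ) := ⟨by linarith [hs.1], by linarith [hs.2]⟩
    have hloc : ψ =ᶠ[nhds s] (φ ∘ γ) :=
      eventually_of_mem (Ioo_mem_nhds hsIoo.1 hsIoo.2)
        (fun y hy => (hψeq (Ioo_subset_Icc_self hy)).symm)
    exact hloc.deriv_eq
  have hchain : ∀ᵐ s ∂(volume.restrict (Ioc t 1)),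
      deriv (φ ∘ γ) s = fderiv ℝ φ (γ s) (deriv γ s) := by
    filter_upwards [ae_restrict_of_ae (hK.ae_differentiableAt (μ := volume))] with s hs
    exact ((hφdiff (γ s)).hasFDerivAt.comp_hasDerivAt s hs.hasDerivAt).deriv
  have hineq' : ∀ᵐ s ∂(volume.restrict (Ioc t 1)),
      fderiv ℝ φ (γ s) (deriv γ s) ≤ lam * σ (γ s) (deriv γ s) := by
    rw [← Measure.restrict_congr_set Ioo_ae_eq_Ioc]
    exact hineq
  have hψint : IntegrableOn (deriv ψ) (Ioc t 1) volume := by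
    have hfin : volume (Ioc t (1:ℝ)) < ⊤ := measure_Ioc_lt_top
    haveI : IsFiniteMeasure (volume.restrict (Ioc t (1:ℝ))) :=
      ⟨by rwa [Measure.restrict_apply_univ]⟩
    refine ⟨(measurable_deriv ψ).aestronglyMeasurable.restrict, ?_⟩
    apply HasFiniteIntegral.of_bounded (C := ((M0.toNNReal * K : NNReal) : ℝ))
    filter_upwards with s using lipschitz_norm_deriv_le hψlip s
  have hg_intOn : IntegrableOn g (Ioc t 1) volume := by
    have h1 := hg_int t 1
    rwa [intervalIntegrable_iff, uIoc_of_le ht1.le] at h1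
  have hmono : ∫ s in t..(1:ℝ), deriv ψ s ≤ ∫ s in t..(1:ℝ), lam * g s := by
    rw [intervalIntegral.integral_of_le ht1.le, intervalIntegral.integral_of_le ht1.le]
    apply setIntegral_mono_ae_restrict hψint (hg_intOn.const_mul lam)
    filter_upwards [hchain, hineq', ae_restrict_mem measurableSet_Ioc] with s h1 h2 hs
    have hmem : s ∈ Icc (0:ℝ) 1 := ⟨(ht0.trans hs.1).le, hs.2⟩
    rw [hderiv_eq s hs, h1, hgicc s hmem]
    exact h2
  have hspeed' : ∀ᵐ s ∂(volume.restrict (Ioc t 1)), ‖deriv γ s‖ = ℓγ := by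
    rw [← Measure.restrict_congr_set Ioo_ae_eq_Ioc]
    exact ae_restrict_of_ae_restrict_of_subset (Ioo_subset_Ioo ht0.le le_rfl) hspeed
  have hlow : σl * ℓγ * (1 - t) ≤ ∫ s in t..(1:ℝ), g s := by
    rw [intervalIntegral.integral_of_le ht1.le]
    have hmono2 : ∫ _ in Ioc t 1, (σl * ℓγ) ∂volume ≤ ∫ s in Ioc t 1, g s := by
      apply setIntegral_mono_ae_restrict (integrableOn_const measure_Ioc_lt_top.ne)
        hg_intOn
      filter_upwards [hspeed', ae_restrict_mem measurableSet_Ioc] with s h1 hs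
      have hmem : s ∈ Icc (0:ℝ) 1 := ⟨(ht0.trans hs.1).le, hs.2⟩
      rw [hgicc s hmem]
      calc σl * ℓγ = σl * ‖deriv γ s‖ := by rw [h1]
        _ ≤ σ (γ s) (deriv γ s) := (hσbound _ (hγΩ s hmem) _).1
    calc σl * ℓγ * (1-t) = (volume (Ioc t (1:ℝ))).toReal • (σl * ℓγ) := by
          rw [Real.volume_Ioc, ENNReal.toReal_ofReal (by linarith), smul_eq_mul]; ring
      _ = ∫ _ in Ioc t 1, (σl * ℓγ) ∂volume := by rw [setIntegral_const, Measure.real]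
      _ ≤ _ := hmono2
  have e1 : ∫ s in t..(1:ℝ), lam * g s
      = (∫ s in t..(1:ℝ), g s) + (lam - 1) * ∫ s in t..(1:ℝ), g s := by
    rw [intervalIntegral.integral_const_mul]; ring
  have e2 : (lam - 1) * ∫ s in t..(1:ℝ), g s ≤ (lam - 1) * (σl * ℓγ * (1-t)) :=
    mul_le_mul_of_nonpos_left hlow (by linarith)
  have hfinal : φ x - φ (γ t) ≤ v x - v (γ t) + (lam - 1) * (1 - t) * ℓγ * σl := by
    have e3 : (lam - 1) * (σl * ℓγ * (1-t)) = (lam - 1)*(1-t)*ℓγ*σl := by ring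
    rw [hftc]
    linarith [hmono, e1, e2, key1]
  refine ⟨hfinal, ?_⟩
  have hneg : (lam - 1) * (1 - t) * ℓγ * σl < 0 := by
    have h1 : (0:ℝ) < (1 - t) * ℓγ * σl := mul_pos (mul_pos (by linarith) hℓγ) hσl
    nlinarith
  linarith
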